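/- arXiv:math/9909040 — 2 statements merged into one kernel-verified Lean document; each statement's English description precedes it below -/
import Mathlib

section
/- Let A be a uniform algebra on a compact Hausdorff space Ω such that the Choquet boundary Ch(A) is dense in Ω (i.e. Ω is the Shilov boundary of A). If Ch(A) is a proper subset of Ω, then A is not convexly approximating in modulus: there exists a nonnegative f ∈ C(Ω,ℝ) that does not lie in 𝒢, the uniform closure of the set of finite sums Σᵢ |gᵢ|² with gᵢ ∈ A. -/
open Filter

section Preamble

variable {Ω : Type*} [TopologicalSpace Ω] [CompactSpace Ω] [T2Space Ω]

/-- The evaluation functional at a point `x`, as a continuous linear functional on a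
subspace `A` of `C(Ω, ℂ)`. -/
noncomputable def evalFunctional (A : Submodule ℂ C(Ω, ℂ)) (x : Ω) : A →L[ℂ] ℂ :=
  LinearMap.mkContinuous
    { toFun := fun a => (a : C(Ω, ℂ)) x
      map_add' := fun a b => rfl
      map_smul' := fun c a => rfl } 1
    (fun a => by rw [one_mul]; exact (a : C(Ω, ℂ)).norm_coe_le_norm x)

/-- `x` is in the Choquet boundary of the subspace `A ⊆ C(Ω, ℂ)` iff the evaluation
functional at `x` is an extreme point of the closed unit ball of the dual space `A*`. -/
def InChoquet (A : Submodule ℂ C(Ω, ℂ)) (x : Ω) : Prop :=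
  evalFunctional A x ∈ Set.extremePoints ℝ (Metric.closedBall (0 : A →L[ℂ] ℂ) 1)

/-- A real-valued continuous function, viewed as a complex-valued continuous function. -/
noncomputable def ofRealCM (f : C(Ω, ℝ)) : C(Ω, ℂ) :=
  ⟨fun x => (f x : ℂ), Complex.continuous_ofReal.comp f.continuous⟩

/-- The submodule `A·f = {a·f : a ∈ A}` of `C(Ω, ℂ)`. -/
noncomputable def moduleAf (A : Subalgebra ℂ C(Ω, ℂ)) (f : C(Ω, ℝ)) : Submodule ℂ C(Ω, ℂ) :=
  (Subalgebra.toSubmodule A).map (LinearMap.mulRight ℂ (ofRealCM f))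

/-- A map `S` between two `A`-submodules `X, Y` of `C(Ω, ℂ)` is an `A`-module map if
`S(a·x) = a·S(x)` for all `a ∈ A`, `x ∈ X`. -/
def IsModuleMapOn (A : Subalgebra ℂ C(Ω, ℂ)) {X Y : Submodule ℂ C(Ω, ℂ)} (S : X → Y) : Prop :=
  ∀ (a : C(Ω, ℂ)), a ∈ A → ∀ (x : X) (h : a * (x : C(Ω, ℂ)) ∈ X),
    ((S ⟨a * (x : C(Ω, ℂ)), h⟩ : C(Ω, ℂ))) = a * ((S x : C(Ω, ℂ)))

/-- There is a surjective linear isometry from `X` onto `Y`. -/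
def ExistsLinearIsometry (X Y : Submodule ℂ C(Ω, ℂ)) : Prop :=
  ∃ S : X →ₗ[ℂ] Y, Function.Surjective S ∧ ∀ x, ‖S x‖ = ‖x‖

/-- There is a surjective isometric `A`-module isomorphism from `X` onto `Y`. -/
def ExistsModuleIsometry (A : Subalgebra ℂ C(Ω, ℂ)) (X Y : Submodule ℂ C(Ω, ℂ)) : Prop :=
  ∃ S : X →ₗ[ℂ] Y, Function.Surjective S ∧ (∀ x, ‖S x‖ = ‖x‖) ∧ IsModuleMapOn A S

/-- `X` and `Y` are almost isometric: for every `ε > 0` there is a bijective bounded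
linear map `T : X → Y` with `‖T‖·‖T⁻¹‖ < 1 + ε`. -/
def AlmostIsometric (X Y : Submodule ℂ C(Ω, ℂ)) : Prop :=
  ∀ ε : ℝ, 0 < ε → ∃ T : X ≃L[ℂ] Y,
    ‖T.toContinuousLinearMap‖ * ‖T.symm.toContinuousLinearMap‖ < 1 + ε

/-- `X` and `Y` are almost `A`-isometric: for every `ε > 0` there is a bijective bounded
`A`-module map `T : X → Y` with `‖T‖·‖T⁻¹‖ < 1 + ε`. -/
def AlmostAIsometric (A : Subalgebra ℂ C(Ω, ℂ)) (X Y : Submodule ℂ C(Ω, ℂ)) : Prop :=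
  ∀ ε : ℝ, 0 < ε → ∃ T : X ≃L[ℂ] Y, IsModuleMapOn A T ∧
    ‖T.toContinuousLinearMap‖ * ‖T.symm.toContinuousLinearMap‖ < 1 + ε

/-- `f ∈ Q`: `f = |g|` for an invertible element `g` of `A`. -/
def MemQ (A : Subalgebra ℂ C(Ω, ℂ)) (f : C(Ω, ℝ)) : Prop :=
  ∃ g ∈ A, (∃ g' ∈ A, g * g' = 1) ∧ ∀ x, f x = ‖g x‖

/-- `f ∈ Q̄`: `f` is a uniform limit on `Ω` of moduli of invertible elements of `A`. -/
def MemQbar (A : Subalgebra ℂ C(Ω, ℂ)) (f : C(Ω, ℝ)) : Prop :=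
  ∃ g : ℕ → C(Ω, ℂ), (∀ n, g n ∈ A ∧ ∃ g' ∈ A, g n * g' = 1) ∧
    TendstoUniformly (fun n x => ‖g n x‖) (fun x => f x) atTop

/-- `f ∈ 𝓜_A(Ω)`: there are sequences of `A`-tuples `Kₙ`, `Hₙ` with `Kₙ.Hₙ = 1`,
`‖Kₙ(w)‖₂ → f(w)` uniformly, and `‖Hₙ(w)‖₂ → f(w)⁻¹` uniformly on `Ω`. -/
def MemM (A : Subalgebra ℂ C(Ω, ℂ)) (f : C(Ω, ℝ)) : Prop :=
  ∃ (n : ℕ → ℕ) (K H : (m : ℕ) → Fin (n m) → C(Ω, ℂ)),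
    (∀ m i, K m i ∈ A) ∧ (∀ m i, H m i ∈ A) ∧
    (∀ m (x : Ω), (∑ i, K m i x * H m i x) = 1) ∧
    TendstoUniformly (fun m x => Real.sqrt (∑ i, ‖K m i x‖ ^ 2))
      (fun x => f x) atTop ∧
    TendstoUniformly (fun m x => Real.sqrt (∑ i, ‖H m i x‖ ^ 2))
      (fun x => (f x)⁻¹) atTop

/-- The set `𝓕` of finite sums `Σᵢ |gᵢ|²` with `gᵢ ∈ A`. -/
def calF (A : Subalgebra ℂ C(Ω, ℂ)) : Set C(Ω, ℝ) :=
  {u | ∃ (n : ℕ) (g : Fin n → C(Ω, ℂ)), (∀ i, g i ∈ A) ∧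
    ∀ x, u x = ∑ i, ‖g i x‖ ^ 2}

end Preamble
set_option linter.unusedSectionVars false
section Helpers

variable {Ω : Type*} [TopologicalSpace Ω] [CompactSpace Ω] [T2Space Ω]

lemma ofRealCM_apply (f : C(Ω, ℝ)) (x : Ω) : ofRealCM f x = (f x : ℂ) := rfl

lemma ofRealCM_add (f g : C(Ω, ℝ)) : ofRealCM (f + g) = ofRealCM f + ofRealCM g := by
  ext x; simp [ofRealCM]

lemma ofRealCM_sub (f g : C(Ω, ℝ)) : ofRealCM (f - g) = ofRealCM f - ofRealCM g := by
  ext x; simp [ofRealCM]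

lemma ofRealCM_continuous : Continuous (ofRealCM (Ω := Ω)) := by
  have : LipschitzWith 1 (ofRealCM (Ω := Ω)) := by
    apply LipschitzWith.of_dist_le_mul
    intro f g
    push_cast
    rw [one_mul]
    refine (ContinuousMap.dist_le dist_nonneg).2 fun x => ?_
    have : dist (ofRealCM f x) (ofRealCM g x) = dist (f x) (g x) := by
      simp [ofRealCM_apply, Complex.dist_eq, ← Complex.ofReal_sub, Complex.norm_real, Real.norm_eq_abs,
        Real.dist_eq]
    rw [this]
    exact ContinuousMap.dist_apply_le_dist x
  exact this.continuous

/-- Basic estimate: a norm-≤1 unital functional moves values by at most the sup distance. -/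
lemma state_est (Θ : C(Ω, ℂ) →L[ℂ] ℂ) (hn : ‖Θ‖ ≤ 1) (h1 : Θ 1 = 1)
    (g : C(Ω, ℂ)) (c : ℂ) : ‖Θ g - c‖ ≤ ‖g - c • 1‖ := by
  have : Θ g - c = Θ (g - c • 1) := by
    rw [map_sub, map_smul, h1]; simp
  rw [this]
  calc ‖Θ (g - c • 1)‖ ≤ ‖Θ‖ * ‖g - c • 1‖ := Θ.le_opNorm _
    _ ≤ 1 * ‖g - c • 1‖ := by gcongr
    _ = ‖g - c • 1‖ := one_mul _

lemma state_real (Θ : C(Ω, ℂ) →L[ℂ] ℂ) (hn : ‖Θ‖ ≤ 1) (h1 : Θ 1 = 1)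
    (f : C(Ω, ℝ)) : (Θ (ofRealCM f)).im = 0 := by
  by_contra him
  set z := Θ (ofRealCM f) with hz
  set t : ℝ := -(‖f‖ ^ 2 + 1) / (2 * z.im) with ht
  have hest := state_est Θ hn h1 (ofRealCM f) (t * Complex.I)
  have hb : ‖ofRealCM f - (t * Complex.I) • 1‖ ≤ Real.sqrt (‖f‖ ^ 2 + t ^ 2) := by
    refine (ContinuousMap.norm_le _ (Real.sqrt_nonneg _)).2 fun x => ?_
    have hx : (ofRealCM f - (t * Complex.I) • 1) x = (f x : ℂ) - t * Complex.I := by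
      simp [ofRealCM_apply]
    rw [hx, Complex.norm_def, Complex.normSq_apply]
    have hre : ((f x : ℂ) - t * Complex.I).re = f x := by simp
    have him' : ((f x : ℂ) - t * Complex.I).im = -t := by simp
    rw [hre, him']
    apply Real.sqrt_le_sqrt
    have := ContinuousMap.norm_coe_le_norm f x
    have h2 : |f x| ≤ ‖f‖ := by simpa [Real.norm_eq_abs] using this
    nlinarith [abs_nonneg (f x), le_abs_self (f x), neg_abs_le (f x)]
  have hsq : ‖z - t * Complex.I‖ ^ 2 ≤ ‖f‖ ^ 2 + t ^ 2 := by
    have h0 : (0:ℝ) ≤ ‖f‖ ^ 2 + t ^ 2 := by positivity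
    have := hest.trans hb
    nlinarith [norm_nonneg (z - t * Complex.I), Real.sq_sqrt h0, Real.sqrt_nonneg (‖f‖ ^ 2 + t ^ 2)]
  have hexp : ‖z - t * Complex.I‖ ^ 2 = z.re ^ 2 + (z.im - t) ^ 2 := by
    rw [Complex.sq_norm, Complex.normSq_apply]
    simp
    ring
  have htz : 2 * t * z.im = -(‖f‖ ^ 2 + 1) := by
    rw [ht]; field_simp
  nlinarith [sq_nonneg z.re, sq_nonneg (z.im)]

lemma state_nonneg (Θ : C(Ω, ℂ) →L[ℂ] ℂ) (hn : ‖Θ‖ ≤ 1) (h1 : Θ 1 = 1)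
    (f : C(Ω, ℝ)) (hf : ∀ x, 0 ≤ f x) : 0 ≤ (Θ (ofRealCM f)).re := by
  set z := Θ (ofRealCM f) with hz
  have hest := state_est Θ hn h1 (ofRealCM f) ((‖f‖ / 2 : ℝ) : ℂ)
  have hb : ‖ofRealCM f - ((‖f‖ / 2 : ℝ) : ℂ) • 1‖ ≤ ‖f‖ / 2 := by
    refine (ContinuousMap.norm_le _ (by positivity)).2 fun x => ?_
    have hx : (ofRealCM f - ((‖f‖ / 2 : ℝ) : ℂ) • 1) x = ((f x - ‖f‖ / 2 : ℝ) : ℂ) := by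
      simp only [ContinuousMap.sub_apply, ContinuousMap.smul_apply, ContinuousMap.one_apply,
        smul_eq_mul, mul_one, ofRealCM_apply]
      push_cast; ring
    rw [hx, Complex.norm_real, Real.norm_eq_abs]
    have h2 : |f x| ≤ ‖f‖ := by
      simpa [Real.norm_eq_abs] using ContinuousMap.norm_coe_le_norm f x
    rw [abs_le]
    constructor <;> nlinarith [hf x, le_abs_self (f x)]
  have h3 := hest.trans hb
  have h4 : |z.re - ‖f‖ / 2| ≤ ‖f‖ / 2 := by
    calc |z.re - ‖f‖ / 2| = |(z - ((‖f‖ / 2 : ℝ) : ℂ)).re| := by simp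
      _ ≤ ‖z - ((‖f‖ / 2 : ℝ) : ℂ)‖ := Complex.abs_re_le_norm _
      _ ≤ ‖f‖ / 2 := h3
  rw [abs_le] at h4
  linarith [h4.1]

end Helpers
section Helpers2
set_option linter.unusedSectionVars false

variable {Ω : Type*} [TopologicalSpace Ω] [CompactSpace Ω] [T2Space Ω]

noncomputable def reCM (g : C(Ω, ℂ)) : C(Ω, ℝ) :=
  ⟨fun x => (g x).re, Complex.continuous_re.comp g.continuous⟩

noncomputable def imCM (g : C(Ω, ℂ)) : C(Ω, ℝ) :=
  ⟨fun x => (g x).im, Complex.continuous_im.comp g.continuous⟩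

lemma cm_decomp (g : C(Ω, ℂ)) :
    g = ofRealCM (reCM g) + Complex.I • ofRealCM (imCM g) := by
  ext x
  simp only [ContinuousMap.add_apply, ContinuousMap.smul_apply, ofRealCM_apply, reCM, imCM,
    ContinuousMap.coe_mk, smul_eq_mul]
  apply Complex.ext <;> simp

lemma cm_star_decomp (g : C(Ω, ℂ)) :
    star g = ofRealCM (reCM g) - Complex.I • ofRealCM (imCM g) := by
  ext x
  simp only [ContinuousMap.star_apply, ContinuousMap.sub_apply, ContinuousMap.smul_apply,
    ofRealCM_apply, reCM, imCM, ContinuousMap.coe_mk, smul_eq_mul]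
  apply Complex.ext <;> simp [Complex.star_def]

lemma state_conj (Θ : C(Ω, ℂ) →L[ℂ] ℂ) (hn : ‖Θ‖ ≤ 1) (h1 : Θ 1 = 1)
    (g : C(Ω, ℂ)) : Θ (star g) = starRingEnd ℂ (Θ g) := by
  have hp := state_real Θ hn h1 (reCM g)
  have hq := state_real Θ hn h1 (imCM g)
  have h2 : Θ g = Θ (ofRealCM (reCM g)) + Complex.I * Θ (ofRealCM (imCM g)) := by
    conv_lhs => rw [cm_decomp g]
    rw [map_add, map_smul]; simp
  have h3 : Θ (star g) = Θ (ofRealCM (reCM g)) - Complex.I * Θ (ofRealCM (imCM g)) := by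
    conv_lhs => rw [cm_star_decomp g]
    rw [map_sub, map_smul]; simp
  rw [h2, h3]
  apply Complex.ext <;> simp [hp, hq]

lemma state_cs (Θ : C(Ω, ℂ) →L[ℂ] ℂ) (hn : ‖Θ‖ ≤ 1) (h1 : Θ 1 = 1)
    (g : C(Ω, ℂ)) : ‖Θ g‖ ^ 2 ≤ (Θ (g * star g)).re := by
  set w := Θ g with hw
  set F : C(Ω, ℝ) := ⟨fun x => Complex.normSq (g x - w),
    Complex.continuous_normSq.comp (g.continuous.sub continuous_const)⟩ with hF
  have hFeq : ofRealCM F = g * star g - (starRingEnd ℂ w) • g - w • star g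
      + ((Complex.normSq w : ℝ) : ℂ) • 1 := by
    ext x
    simp only [ofRealCM_apply, hF, ContinuousMap.coe_mk, ContinuousMap.add_apply,
      ContinuousMap.sub_apply, ContinuousMap.smul_apply, ContinuousMap.mul_apply,
      ContinuousMap.star_apply, ContinuousMap.one_apply, smul_eq_mul, mul_one,
      Complex.star_def]
    rw [← Complex.mul_conj, ← Complex.mul_conj, map_sub]
    ring
  have hnn : 0 ≤ (Θ (ofRealCM F)).re :=
    state_nonneg Θ hn h1 F (fun x => Complex.normSq_nonneg _)
  rw [hFeq] at hnn
  rw [map_add, map_sub, map_sub, map_smul, map_smul, map_smul, h1] at hnn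
  have hstar : Θ (star g) = starRingEnd ℂ w := state_conj Θ hn h1 g
  rw [hstar, ← hw] at hnn
  have : (starRingEnd ℂ w • w) = ((Complex.normSq w : ℝ) : ℂ) := by
    simp [smul_eq_mul, mul_comm, Complex.mul_conj]
  rw [Complex.sq_norm]
  have hexp : (Θ (g * star g) - starRingEnd ℂ w • w - w • starRingEnd ℂ w
      + ((Complex.normSq w : ℝ) : ℂ) • 1).re
      = (Θ (g * star g)).re - Complex.normSq w := by
    have h5 : w * starRingEnd ℂ w = ((Complex.normSq w : ℝ) : ℂ) := Complex.mul_conj w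
    have h6 : starRingEnd ℂ w * w = ((Complex.normSq w : ℝ) : ℂ) := by rw [mul_comm]; exact h5
    simp only [smul_eq_mul, mul_one, h5, h6, Complex.sub_re, Complex.add_re, Complex.ofReal_re]
    ring
  rw [hexp] at hnn
  linarith

lemma ofRealCM_sum_sq {n : ℕ} (g : Fin n → C(Ω, ℂ)) (u : C(Ω, ℝ))
    (hu : ∀ x, u x = ∑ i, ‖g i x‖ ^ 2) :
    ofRealCM u = ∑ i, g i * star (g i) := by
  ext x
  simp only [ofRealCM_apply, hu x, ContinuousMap.coe_sum, ContinuousMap.mul_apply,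
    ContinuousMap.star_apply, Finset.sum_apply]
  push_cast
  refine Finset.sum_congr rfl fun i _ => ?_
  rw [← Complex.ofReal_pow, Complex.sq_norm, Complex.star_def]
  exact (Complex.mul_conj _).symm

end Helpers2
section Helpers3
variable {Ω : Type*} [TopologicalSpace Ω] [CompactSpace Ω] [T2Space Ω]
lemma evalFunctional_apply (N : Submodule ℂ C(Ω, ℂ)) (x : Ω) (v : N) :
    evalFunctional N x v = (v : C(Ω, ℂ)) x := rfl
end Helpers3
section RealHelpers

lemma aux_unital {a b : ℝ} (ha : 0 < a) (hb : 0 < b) (hab : a + b = 1) {z w : ℂ}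
    (hzn : ‖z‖ ≤ 1) (hwn : ‖w‖ ≤ 1)
    (h1 : (a : ℂ) * z + (b : ℂ) * w = 1) : z = 1 ∧ w = 1 := by
  have hre : a * z.re + b * w.re = 1 := by
    have := congrArg Complex.re h1
    simpa [Complex.add_re, Complex.mul_re] using this
  have hz2 : z.re ^ 2 + z.im ^ 2 ≤ 1 := by
    have h3 := Complex.sq_norm z
    rw [Complex.normSq_apply] at h3
    nlinarith [norm_nonneg z]
  have hw2 : w.re ^ 2 + w.im ^ 2 ≤ 1 := by
    have h3 := Complex.sq_norm w
    rw [Complex.normSq_apply] at h3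
    nlinarith [norm_nonneg w]
  have hzre : z.re = 1 := by
    nlinarith [sq_nonneg z.im, sq_nonneg w.im, sq_nonneg (z.re - 1), sq_nonneg (w.re - 1)]
  have hwre : w.re = 1 := by
    nlinarith [sq_nonneg z.im, sq_nonneg w.im, sq_nonneg (z.re - 1), sq_nonneg (w.re - 1)]
  constructor
  · apply Complex.ext
    · exact hzre
    · show z.im = (1 : ℂ).im
      rw [Complex.one_im]
      nlinarith [hz2, hzre, sq_nonneg z.im]
  · apply Complex.ext
    · exact hwre
    · show w.im = (1 : ℂ).im
      rw [Complex.one_im]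
      nlinarith [hw2, hwre, sq_nonneg w.im]

lemma aux_sq_combo {a b X Y Z P Q : ℝ} (ha : 0 < a) (hb : 0 < b) (hab : a + b = 1)
    (habs : Z ≤ a * X + b * Y) (h1 : X ^ 2 ≤ P) (h2 : Y ^ 2 ≤ Q)
    (hZ : 0 ≤ Z) (hX : 0 ≤ X) (hY : 0 ≤ Y) : Z ^ 2 ≤ a * P + b * Q := by
  have h3 : Z ^ 2 ≤ (a * X + b * Y) ^ 2 := pow_le_pow_left₀ hZ habs 2
  have h5 : (a * X + b * Y) ^ 2 + a * b * (X - Y) ^ 2 = a * X ^ 2 + b * Y ^ 2 := by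
    have hb' : b = 1 - a := by linarith
    subst hb'; ring
  linarith [mul_nonneg (mul_pos ha hb).le (sq_nonneg (X - Y)),
    mul_le_mul_of_nonneg_left h1 ha.le, mul_le_mul_of_nonneg_left h2 hb.le]

lemma aux_zero_zero {a b r s : ℝ} (ha : 0 < a) (hb : 0 < b)
    (h : a * r + b * s = 0) (hr : 0 ≤ r) (hs : 0 ≤ s) : r = 0 ∧ s = 0 := by
  constructor
  · nlinarith [mul_nonneg hb.le hs]
  · nlinarith [mul_nonneg ha.le hr]

lemma aux_contra1 {a b r s c H : ℝ} (hab : a + b = 1)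
    (hlt : a * r + b * s < c) (hk : c + H ≤ a * (r + H) + b * (s + H)) : False := by
  have : a * (r + H) + b * (s + H) = a * r + b * s + H := by
    have : a * (r + H) + b * (s + H) = a * r + b * s + (a + b) * H := by ring
    rw [this, hab, one_mul]
  linarith

lemma aux_contra2 {a b r s c H : ℝ} (hab : a + b = 1)
    (hgt : c < a * r + b * s) (hk : -c + H ≤ a * (-r + H) + b * (-s + H)) : False := by
  have : a * (-r + H) + b * (-s + H) = -(a * r + b * s) + H := by
    have : a * (-r + H) + b * (-s + H) = -(a * r + b * s) + (a + b) * H := by ring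
    rw [this, hab, one_mul]
  linarith

end RealHelpers
set_option maxHeartbeats 1000000 in
theorem stmt_12 {Ω : Type*} [TopologicalSpace Ω] [CompactSpace Ω] [T2Space Ω]
    (A : Subalgebra ℂ C(Ω, ℂ))
    (hclosed : IsClosed (A : Set C(Ω, ℂ)))
    (hsep : ∀ x y : Ω, x ≠ y → ∃ a ∈ A, a x ≠ a y)
    (hshilov : Dense {x : Ω | InChoquet (Subalgebra.toSubmodule A) x})
    (hproper : {x : Ω | InChoquet (Subalgebra.toSubmodule A) x} ≠ Set.univ) :
    ∃ f : C(Ω, ℝ), (∀ x, 0 ≤ f x) ∧ f ∉ closure (calF A) := by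
  classical
  -- a non-Choquet point
  obtain ⟨x₀, hx₀⟩ : ∃ x₀ : Ω, ¬ InChoquet (Subalgebra.toSubmodule A) x₀ := by
    by_contra h
    push_neg at h
    exact hproper (Set.eq_univ_of_forall fun x => h x)
  set M := Subalgebra.toSubmodule A with hM
  set e := evalFunctional M x₀ with he
  have hemem : e ∈ Metric.closedBall (0 : M →L[ℂ] ℂ) 1 := by
    rw [Metric.mem_closedBall]
    calc dist e 0 = ‖e‖ := dist_zero_right e
      _ ≤ 1 := LinearMap.mkContinuous_norm_le _ zero_le_one _
  rw [InChoquet, mem_extremePoints] at hx₀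
  push_neg at hx₀
  obtain ⟨φ, hφmem, ψ, hψmem, hseg, hnetriv⟩ := hx₀ hemem
  obtain ⟨a, b, ha, hb, hab, heq⟩ := hseg
  have hφψ : φ ≠ ψ := by
    intro hc
    subst hc
    have hφe : φ = e := by
      ext v
      have h' := DFunLike.congr_fun heq v
      simp only [ContinuousLinearMap.add_apply, ContinuousLinearMap.smul_apply,
        Complex.real_smul] at h'
      have hab' : ((a : ℂ) + (b : ℂ)) = 1 := by norm_cast
      calc φ v = ((a : ℂ) + (b : ℂ)) * φ v := by rw [hab', one_mul]
        _ = (a : ℂ) * φ v + (b : ℂ) * φ v := by ring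
        _ = e v := h'
    exact (hnetriv hφe) hφe
  have hφn : ‖φ‖ ≤ 1 := by
    have h2 := Metric.mem_closedBall.1 hφmem
    calc ‖φ‖ = dist φ 0 := (dist_zero_right φ).symm
      _ ≤ 1 := h2
  have hψn : ‖ψ‖ ≤ 1 := by
    have h2 := Metric.mem_closedBall.1 hψmem
    calc ‖ψ‖ = dist ψ 0 := (dist_zero_right ψ).symm
      _ ≤ 1 := h2
  -- the unit
  have hone : (1 : C(Ω, ℂ)) ∈ M := (Subalgebra.mem_toSubmodule A).mpr A.one_mem
  set oneA : M := ⟨1, hone⟩ with honeA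
  have honen : ‖oneA‖ ≤ 1 := by
    show ‖(1 : C(Ω, ℂ))‖ ≤ 1
    exact (ContinuousMap.norm_le _ zero_le_one).2 fun x => by simp
  have heone : e oneA = 1 := by
    rw [he, evalFunctional_apply]
    simp [honeA]
  -- evaluate the segment equation at elements
  have happly : ∀ v : M, (a : ℂ) * φ v + (b : ℂ) * ψ v = (v : C(Ω, ℂ)) x₀ := by
    intro v
    have := DFunLike.congr_fun heq v
    simpa [ContinuousLinearMap.add_apply, ContinuousLinearMap.smul_apply,
      Complex.real_smul, evalFunctional_apply] using this
  -- φ and ψ are unital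
  have hunital : φ oneA = 1 ∧ ψ oneA = 1 := by
    have hzn : ‖φ oneA‖ ≤ 1 := by
      calc ‖φ oneA‖ = ‖φ oneA‖ := rfl
        _ ≤ ‖φ‖ * ‖oneA‖ := φ.le_opNorm _
        _ ≤ 1 * 1 := mul_le_mul hφn honen (norm_nonneg oneA) zero_le_one
        _ = 1 := one_mul 1
    have hwn : ‖ψ oneA‖ ≤ 1 := by
      calc ‖ψ oneA‖ = ‖ψ oneA‖ := rfl
        _ ≤ ‖ψ‖ * ‖oneA‖ := ψ.le_opNorm _
        _ ≤ 1 * 1 := mul_le_mul hψn honen (norm_nonneg oneA) zero_le_one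
        _ = 1 := one_mul 1
    have h1 : (a : ℂ) * φ oneA + (b : ℂ) * ψ oneA = 1 := by
      have := happly oneA
      simpa [honeA] using this
    exact aux_unital ha hb hab hzn hwn h1
  -- Hahn–Banach extensions
  obtain ⟨Φ, hΦext, hΦnorm⟩ := exists_extension_norm_eq M φ
  obtain ⟨Ψ, hΨext, hΨnorm⟩ := exists_extension_norm_eq M ψ
  have hΦn : ‖Φ‖ ≤ 1 := hΦnorm ▸ hφn
  have hΨn : ‖Ψ‖ ≤ 1 := hΨnorm ▸ hψn
  have hΦ1 : Φ 1 = 1 := by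
    have := hΦext oneA
    rw [honeA] at this
    exact this.trans hunital.1
  have hΨ1 : Ψ 1 = 1 := by
    have := hΨext oneA
    rw [honeA] at this
    exact this.trans hunital.2
  -- the key inequality on calF
  have key : ∀ u ∈ calF A, u x₀ ≤ a * (Φ (ofRealCM u)).re + b * (Ψ (ofRealCM u)).re := by
    rintro u ⟨n, g, hg, hu⟩
    have hsum : ofRealCM u = ∑ i, g i * star (g i) := ofRealCM_sum_sq g u hu
    have hterm : ∀ i, ‖g i x₀‖ ^ 2
        ≤ a * (Φ (g i * star (g i))).re + b * (Ψ (g i * star (g i))).re := by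
      intro i
      have hmem : g i ∈ M := (Subalgebra.mem_toSubmodule A).mpr (hg i)
      have hval : (a : ℂ) * Φ (g i) + (b : ℂ) * Ψ (g i) = g i x₀ := by
        have h1 := happly ⟨g i, hmem⟩
        have h2 := hΦext ⟨g i, hmem⟩
        have h3 := hΨext ⟨g i, hmem⟩
        simp only at h1 h2 h3
        rw [← h2, ← h3] at h1
        exact h1
      have habs : ‖g i x₀‖ ≤ a * ‖Φ (g i)‖ + b * ‖Ψ (g i)‖ := by
        rw [← hval]
        calc ‖(a : ℂ) * Φ (g i) + (b : ℂ) * Ψ (g i)‖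
            ≤ ‖(a : ℂ) * Φ (g i)‖ + ‖(b : ℂ) * Ψ (g i)‖ :=
              norm_add_le _ _
          _ = a * ‖Φ (g i)‖ + b * ‖Ψ (g i)‖ := by
              rw [norm_mul, norm_mul, Complex.norm_real, Real.norm_eq_abs, abs_of_pos ha,
                Complex.norm_real, Real.norm_eq_abs, abs_of_pos hb]
      have hcs1 : ‖Φ (g i)‖ ^ 2 ≤ (Φ (g i * star (g i))).re :=
        state_cs Φ hΦn hΦ1 (g i)
      have hcs2 : ‖Ψ (g i)‖ ^ 2 ≤ (Ψ (g i * star (g i))).re :=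
        state_cs Ψ hΨn hΨ1 (g i)
      exact aux_sq_combo ha hb hab habs hcs1 hcs2 (norm_nonneg _)
        (norm_nonneg _) (norm_nonneg _)
    calc u x₀ = ∑ i, ‖g i x₀‖ ^ 2 := hu x₀
      _ ≤ ∑ i, (a * (Φ (g i * star (g i))).re + b * (Ψ (g i * star (g i))).re) :=
          Finset.sum_le_sum fun i _ => hterm i
      _ = a * (Φ (ofRealCM u)).re + b * (Ψ (ofRealCM u)).re := by
          rw [hsum, map_sum, map_sum, Complex.re_sum, Complex.re_sum,
            Finset.sum_add_distrib, ← Finset.mul_sum, ← Finset.mul_sum]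
  -- pass to the closure
  have keycl : ∀ u ∈ closure (calF A),
      u x₀ ≤ a * (Φ (ofRealCM u)).re + b * (Ψ (ofRealCM u)).re := by
    have hcont1 : Continuous fun u : C(Ω, ℝ) => (Φ (ofRealCM u)).re :=
      Complex.continuous_re.comp (Φ.continuous.comp ofRealCM_continuous)
    have hcont2 : Continuous fun u : C(Ω, ℝ) => (Ψ (ofRealCM u)).re :=
      Complex.continuous_re.comp (Ψ.continuous.comp ofRealCM_continuous)
    have hcl : IsClosed {u : C(Ω, ℝ) |
        u x₀ ≤ a * (Φ (ofRealCM u)).re + b * (Ψ (ofRealCM u)).re} :=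
      isClosed_le (ContinuousEvalConst.continuous_eval_const x₀)
        ((continuous_const.mul hcont1).add (continuous_const.mul hcont2))
    exact fun u hu => closure_minimal key hcl hu
  -- case split
  by_cases hL : ∀ h : C(Ω, ℝ), a * (Φ (ofRealCM h)).re + b * (Ψ (ofRealCM h)).re = h x₀
  · -- then Φ and Ψ are both evaluation at x₀, contradicting φ ≠ ψ
    exfalso
    have hker : ∀ h : C(Ω, ℝ), (∀ x, 0 ≤ h x) → h x₀ = 0 →
        Φ (ofRealCM h) = 0 ∧ Ψ (ofRealCM h) = 0 := by
      intro h hpos h0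
      have h1 := hL h
      rw [h0] at h1
      have h2 : 0 ≤ (Φ (ofRealCM h)).re := state_nonneg Φ hΦn hΦ1 h hpos
      have h3 : 0 ≤ (Ψ (ofRealCM h)).re := state_nonneg Ψ hΨn hΨ1 h hpos
      obtain ⟨h4, h5⟩ := aux_zero_zero ha hb h1 h2 h3
      exact ⟨Complex.ext h4 (state_real Φ hΦn hΦ1 h),
        Complex.ext h5 (state_real Ψ hΨn hΨ1 h)⟩
    have hreal : ∀ h : C(Ω, ℝ), Φ (ofRealCM h) = (h x₀ : ℂ) ∧ Ψ (ofRealCM h) = (h x₀ : ℂ) := by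
      intro h
      set c := h x₀ with hc
      set p : C(Ω, ℝ) := ⟨fun x => max (h x - c) 0,
        ((h.continuous.sub continuous_const).max continuous_const)⟩ with hp
      set q : C(Ω, ℝ) := ⟨fun x => max (-(h x - c)) 0,
        ((h.continuous.sub continuous_const).neg.max continuous_const)⟩ with hq
      have hdecomp : ofRealCM h = (c : ℂ) • 1 + ofRealCM p - ofRealCM q := by
        ext x
        simp only [ofRealCM_apply, ContinuousMap.add_apply, ContinuousMap.sub_apply,
          ContinuousMap.smul_apply, ContinuousMap.one_apply, smul_eq_mul, mul_one,
          hp, hq, ContinuousMap.coe_mk]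
        rw [← Complex.ofReal_add, ← Complex.ofReal_sub]
        congr 1
        have := max_zero_sub_max_neg_zero_eq_self (h x - c)
        linarith
      have hppos : ∀ x, 0 ≤ p x := fun x => le_max_right _ _
      have hqpos : ∀ x, 0 ≤ q x := fun x => le_max_right _ _
      have hp0 : p x₀ = 0 := by simp [hp, ← hc]
      have hq0 : q x₀ = 0 := by simp [hq, ← hc]
      obtain ⟨hP1, hP2⟩ := hker p hppos hp0
      obtain ⟨hQ1, hQ2⟩ := hker q hqpos hq0
      rw [hdecomp]
      constructor
      · rw [map_sub, map_add, map_smul, hΦ1, hP1, hQ1]; simp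
      · rw [map_sub, map_add, map_smul, hΨ1, hP2, hQ2]; simp
    have hcomplex : ∀ g : C(Ω, ℂ), Φ g = g x₀ ∧ Ψ g = g x₀ := by
      intro g
      have h1 := hreal (reCM g)
      have h2 := hreal (imCM g)
      have hd := cm_decomp g
      constructor
      · conv_lhs => rw [hd]
        rw [map_add, map_smul, h1.1, h2.1]
        simp [reCM, imCM, smul_eq_mul]
        apply Complex.ext <;> simp
      · conv_lhs => rw [hd]
        rw [map_add, map_smul, h1.2, h2.2]
        simp [reCM, imCM, smul_eq_mul]
        apply Complex.ext <;> simp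
    apply hφψ
    ext v
    have h1 := hΦext v
    have h2 := hΨext v
    rw [← h1, ← h2, (hcomplex v).1, (hcomplex v).2]
  · -- otherwise construct the counterexample
    push_neg at hL
    obtain ⟨h, hne⟩ := hL
    have hofconst : ∀ (k : C(Ω, ℝ)) (r : ℝ),
        ofRealCM (k + ContinuousMap.const Ω r) = ofRealCM k + (r : ℂ) • 1 := by
      intro k r
      ext x
      simp only [ofRealCM_apply, ContinuousMap.add_apply, ContinuousMap.smul_apply,
        ContinuousMap.one_apply, ContinuousMap.const_apply, smul_eq_mul, mul_one]
      push_cast; ring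
    rcases lt_or_gt_of_ne hne with hlt | hgt
    · -- L h < h x₀ : use f = h + ‖h‖
      refine ⟨h + ContinuousMap.const Ω ‖h‖, fun x => ?_, fun hmem => ?_⟩
      · have h2 : |h x| ≤ ‖h‖ := by
          simpa [Real.norm_eq_abs] using ContinuousMap.norm_coe_le_norm h x
        simp only [ContinuousMap.add_apply, ContinuousMap.const_apply]
        linarith [neg_abs_le (h x)]
      · have hk := keycl _ hmem
        rw [hofconst h ‖h‖] at hk
        have e1 : (Φ (ofRealCM h + ((‖h‖ : ℝ) : ℂ) • 1)).re = (Φ (ofRealCM h)).re + ‖h‖ := by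
          rw [map_add, map_smul, hΦ1, smul_eq_mul, mul_one, Complex.add_re, Complex.ofReal_re]
        have e2 : (Ψ (ofRealCM h + ((‖h‖ : ℝ) : ℂ) • 1)).re = (Ψ (ofRealCM h)).re + ‖h‖ := by
          rw [map_add, map_smul, hΨ1, smul_eq_mul, mul_one, Complex.add_re, Complex.ofReal_re]
        have e0 : (h + ContinuousMap.const Ω ‖h‖) x₀ = h x₀ + ‖h‖ := rfl
        rw [e1, e2, e0] at hk
        exact aux_contra1 hab hlt hk
    · -- L h > h x₀ : use f = -h + ‖h‖
      refine ⟨-h + ContinuousMap.const Ω ‖h‖, fun x => ?_, fun hmem => ?_⟩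
      · have h2 : |h x| ≤ ‖h‖ := by
          simpa [Real.norm_eq_abs] using ContinuousMap.norm_coe_le_norm h x
        simp only [ContinuousMap.add_apply, ContinuousMap.const_apply,
          ContinuousMap.neg_apply]
        linarith [le_abs_self (h x)]
      · have hk := keycl _ hmem
        rw [hofconst (-h) ‖h‖] at hk
        have hofneg : ofRealCM (-h) = -ofRealCM h := by
          ext x; simp [ofRealCM_apply]
        rw [hofneg] at hk
        have e1 : (Φ (-ofRealCM h + ((‖h‖ : ℝ) : ℂ) • 1)).re = -(Φ (ofRealCM h)).re + ‖h‖ := by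
          rw [map_add, map_neg, map_smul, hΦ1, smul_eq_mul, mul_one, Complex.add_re,
            Complex.neg_re, Complex.ofReal_re]
        have e2 : (Ψ (-ofRealCM h + ((‖h‖ : ℝ) : ℂ) • 1)).re = -(Ψ (ofRealCM h)).re + ‖h‖ := by
          rw [map_add, map_neg, map_smul, hΨ1, smul_eq_mul, mul_one, Complex.add_re,
            Complex.neg_re, Complex.ofReal_re]
        have e0 : (-h + ContinuousMap.const Ω ‖h‖) x₀ = -h x₀ + ‖h‖ := rfl
        rw [e1, e2, e0] at hk
        exact aux_contra2 hab hgt hk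
end

section
/- Let A be a uniform algebra on a compact Hausdorff space Ω and let f ∈ C(Ω,ℝ) be strictly positive. Then f ∈ 𝓜_A(Ω) if and only if there exist a sequence of positive integers nₘ and sequences of A-tuples Hₘ, Kₘ ∈ A^{nₘ} such that, uniformly over w ∈ Ω: (i) ‖Kₘ(w)‖₂ → f(w); (ii) ‖Hₘ(w)‖₂ → f(w)⁻¹; and (iii) ‖Kₘ(w) − Hₘ(w)*·f(w)²‖₂ → 0, where Hₘ(w)* denotes the entrywise complex conjugate of the vector Hₘ(w). -/
open Filter

section Helpers

open Filter

private lemma term_id' (k h : ℂ) (r : ℝ) :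
    ‖k - (starRingEnd ℂ) h * (r:ℂ)^2‖ ^ 2
      = ‖k‖ ^ 2 + r^4 * ‖h‖ ^ 2 - 2 * r^2 * (k*h).re := by
  rw [Complex.sq_norm, Complex.sq_norm, Complex.sq_norm, ← Complex.ofReal_pow]
  simp only [Complex.normSq_apply, Complex.sub_re, Complex.sub_im, Complex.mul_re,
    Complex.mul_im, Complex.conj_re, Complex.conj_im, Complex.ofReal_re, Complex.ofReal_im]
  ring

private lemma cs_abs' {n : ℕ} (a b : Fin n → ℂ) :
    ‖∑ i, a i * b i‖
      ≤ Real.sqrt (∑ i, ‖a i‖ ^ 2) * Real.sqrt (∑ i, ‖b i‖ ^ 2) := by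
  calc ‖∑ i, a i * b i‖ ≤ ∑ i, ‖a i * b i‖ :=
        norm_sum_le _ _
    _ = ∑ i, ‖a i‖ * ‖b i‖ := by simp [map_mul]
    _ ≤ _ := Real.sum_mul_le_sqrt_mul_sqrt _ _ _

private lemma tu_shift' {α : Type*} {F : ℕ → α → ℝ} {f : α → ℝ}
    (h : TendstoUniformly F f atTop) (M : ℕ) :
    TendstoUniformly (fun m => F (m + M)) f atTop := by
  rw [Metric.tendstoUniformly_iff] at h ⊢
  intro ε hε
  obtain ⟨N, hN⟩ := eventually_atTop.mp (h ε hε)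
  exact eventually_atTop.mpr ⟨N, fun m hm => hN (m + M) (le_trans hm (Nat.le_add_right _ _))⟩

private lemma inv_mem' {Ω : Type*} [TopologicalSpace Ω] [CompactSpace Ω]
    (A : Subalgebra ℂ C(Ω, ℂ)) (hclosed : IsClosed (A : Set C(Ω, ℂ)))
    (g : C(Ω, ℂ)) (hg : g ∈ A) (hb : ∀ x, ‖g x - 1‖ ≤ 1/2) :
    ∃ q ∈ A, g * q = 1 := by
  haveI : CompleteSpace A := hclosed.completeSpace_coe
  set G : A := ⟨g, hg⟩ with hG
  have hnorm : ‖(1 : A) - G‖ < 1 := by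
    have h1 : ‖(1 : A) - G‖ = ‖(1 : C(Ω,ℂ)) - g‖ := rfl
    rw [h1]
    have h2 : ‖(1 : C(Ω,ℂ)) - g‖ ≤ 1/2 := by
      rw [ContinuousMap.norm_le _ (by norm_num : (0:ℝ) ≤ 1/2)]
      intro x
      have : ((1 : C(Ω,ℂ)) - g) x = 1 - g x := by simp
      rw [this]
      simpa [norm_sub_rev 1 (g x)] using hb x
    linarith
  let u := Units.oneSub ((1:A) - G) hnorm
  refine ⟨((u⁻¹ : (A)ˣ) : A), Subtype.coe_prop _, ?_⟩
  have hval : (u : A) = G := by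
    show (1 : A) - ((1:A) - G) = G
    ring
  have hmul : (u : A) * ((u⁻¹ : (A)ˣ) : A) = 1 := u.mul_inv
  rw [hval] at hmul
  exact congrArg Subtype.val hmul

private lemma arith1' {sa sb fx C D δ ε : ℝ} (hfx : 0 < fx) (hfC : fx ≤ C) (hfD : fx⁻¹ ≤ D)
    (hsa0 : 0 ≤ sa) (hsb0 : 0 ≤ sb) (hda : |fx - sa| < δ) (hdb : |fx⁻¹ - sb| < δ)
    (hδ0 : 0 < δ) (hδ1 : δ ≤ 1) (hδB : δ * (2*C + 1 + C^4*(2*D+1)) ≤ ε^2/2) (hε : 0 < ε) :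
    sa^2 + fx^4*sb^2 - 2*fx^2 < ε^2 := by
  have hC0 : 0 ≤ C := le_trans hfx.le hfC
  have hD0 : 0 ≤ D := le_trans (inv_pos.mpr hfx).le hfD
  have hda1 := abs_lt.mp hda
  have hdb1 := abs_lt.mp hdb
  have hfi0 : 0 < fx⁻¹ := inv_pos.mpr hfx
  have hkey : sa^2 + fx^4*sb^2 - 2*fx^2
      = (sa - fx)*(sa + fx) + fx^4*((sb - fx⁻¹)*(sb + fx⁻¹)) := by
    field_simp
    ring
  rw [hkey]
  have h1 : (sa - fx)*(sa + fx) ≤ δ * (2*C + 1) := by nlinarith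
  have ht2 : (sb - fx⁻¹)*(sb + fx⁻¹) ≤ δ * (2*D + 1) := by nlinarith
  have hf4 : fx^4 ≤ C^4 := pow_le_pow_left₀ hfx.le hfC 4
  have hf40 : 0 ≤ fx^4 := by positivity
  have h2 : fx^4*((sb - fx⁻¹)*(sb + fx⁻¹)) ≤ C^4 * (δ * (2*D+1)) := by
    nlinarith [mul_nonneg hδ0.le (by linarith : (0:ℝ) ≤ 2*D+1)]
  nlinarith

set_option maxHeartbeats 1000000 in
private lemma key_bound' {n : ℕ} (k h : Fin n → ℂ) {fx C D δ : ℝ}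
    (hfx : 0 < fx) (hfC : fx ≤ C) (hfD : fx⁻¹ ≤ D)
    (hE : Real.sqrt (∑ i, ‖k i - (starRingEnd ℂ) (h i) * (fx:ℂ)^2‖^2) ≤ δ)
    (hb : |fx⁻¹ - Real.sqrt (∑ i, ‖h i‖^2)| ≤ δ)
    (hδ0 : 0 ≤ δ) (hδ1 : δ ≤ 1) :
    ‖(∑ i, k i * h i) - 1‖ ≤ δ * ((D+1) + C^2*(2*D+1)) := by
  have hC0 : 0 ≤ C := le_trans hfx.le hfC
  have hfi0 : 0 < fx⁻¹ := inv_pos.mpr hfx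
  have hD0 : 0 ≤ D := le_trans hfi0.le hfD
  set b := ∑ i, ‖h i‖^2 with hbdef
  have hb0 : 0 ≤ b := Finset.sum_nonneg fun i _ => sq_nonneg _
  set sb := Real.sqrt b with hsbdef
  have hsb0 : 0 ≤ sb := Real.sqrt_nonneg _
  have hsb2 : sb^2 = b := Real.sq_sqrt hb0
  set e := Real.sqrt (∑ i, ‖k i - (starRingEnd ℂ) (h i) * (fx:ℂ)^2‖^2) with hedef
  have he0 : 0 ≤ e := Real.sqrt_nonneg _
  set w : ℂ := (fx:ℂ)^2 * ((b:ℝ):ℂ) with hwdef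
  have hz : (∑ i, k i * h i) - w = ∑ i, (k i - (starRingEnd ℂ) (h i) * (fx:ℂ)^2) * h i := by
    have hterm : ∀ i, (k i - (starRingEnd ℂ) (h i) * (fx:ℂ)^2) * h i
        = k i * h i - (fx:ℂ)^2 * ((‖h i‖^2 : ℝ):ℂ) := by
      intro i
      have hc : (starRingEnd ℂ) (h i) * h i = ((‖h i‖^2 : ℝ):ℂ) := by
        rw [Complex.sq_norm]
        exact Complex.normSq_eq_conj_mul_self.symm
      calc (k i - (starRingEnd ℂ) (h i) * (fx:ℂ)^2) * h i
          = k i * h i - (fx:ℂ)^2 * ((starRingEnd ℂ) (h i) * h i) := by ring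
        _ = k i * h i - (fx:ℂ)^2 * ((‖h i‖^2 : ℝ):ℂ) := by rw [hc]
    rw [Finset.sum_congr rfl (fun i _ => hterm i), Finset.sum_sub_distrib, ← Finset.mul_sum,
      hwdef, hbdef]
    push_cast
    ring_nf
  have h1 : ‖(∑ i, k i * h i) - w‖ ≤ e * sb := by
    rw [hz]; exact cs_abs' _ _
  have h2 : ‖w - 1‖ = |fx^2 * b - 1| := by
    have : w - 1 = ((fx^2*b - 1 : ℝ):ℂ) := by rw [hwdef]; push_cast; ring
    rw [this, Complex.norm_real, Real.norm_eq_abs]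
  have h3 : fx^2*b - 1 = fx^2*((sb - fx⁻¹)*(sb + fx⁻¹)) := by
    rw [← hsb2]; field_simp; ring
  have hble := abs_le.mp hb
  have hsbD : sb ≤ D + 1 := by linarith
  have hA : e * sb ≤ δ * (D+1) := mul_le_mul hE hsbD hsb0 hδ0
  have habs' : |sb - fx⁻¹| ≤ δ := by rw [abs_sub_comm]; exact hb
  have hsum2 : sb + fx⁻¹ ≤ 2*D + 1 := by linarith
  have h4 : |fx^2*b - 1| ≤ C^2 * (δ * (2*D+1)) := by
    rw [h3, abs_mul, abs_mul, abs_of_nonneg (by positivity : (0:ℝ) ≤ fx^2),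
      abs_of_nonneg (by linarith : (0:ℝ) ≤ sb + fx⁻¹)]
    have hq1 : fx^2 ≤ C^2 := pow_le_pow_left₀ hfx.le hfC 2
    have hq2 : |sb - fx⁻¹| * (sb + fx⁻¹) ≤ δ * (2*D+1) :=
      mul_le_mul habs' hsum2 (by linarith) hδ0
    nlinarith [sq_nonneg fx, abs_nonneg (sb - fx⁻¹),
      mul_nonneg hδ0 (by linarith : (0:ℝ) ≤ 2*D+1),
      mul_nonneg (abs_nonneg (sb - fx⁻¹)) (by linarith : (0:ℝ) ≤ sb + fx⁻¹)]
  have htri := norm_sub_le_norm_sub_add_norm_sub (∑ i, k i * h i) w 1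
  have hring : δ * ((D+1) + C^2*(2*D+1)) = δ*(D+1) + C^2*(δ*(2*D+1)) := by ring
  rw [← h2] at h4
  linarith

private lemma arith2' {fx sa aq C B δ ε : ℝ} (hfx : 0 < fx) (hfC : fx ≤ C)
    (haq0 : 0 ≤ aq) (haq2 : aq ≤ 2) (hda : |fx - sa| < δ) (habs : |aq - 1| ≤ 2*(δ*B))
    (hδ0 : 0 < δ) (hδR : δ * (2 + 2*C*B) ≤ ε/2) (hε : 0 < ε) :
    |fx - aq*sa| < ε := by
  have key : fx - aq*sa = aq*(fx - sa) + fx*(1 - aq) := by ring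
  rw [key]
  calc |aq*(fx-sa) + fx*(1-aq)| ≤ |aq*(fx-sa)| + |fx*(1-aq)| := abs_add_le _ _
    _ = aq*|fx-sa| + fx*|1-aq| := by
        rw [abs_mul, abs_mul, abs_of_nonneg haq0, abs_of_nonneg hfx.le]
    _ ≤ 2*δ + C*(2*(δ*B)) := by
        have e1 : aq*|fx-sa| ≤ 2*δ := mul_le_mul haq2 hda.le (abs_nonneg _) (by norm_num)
        have e2 : fx*|1-aq| ≤ C*(2*(δ*B)) :=
          mul_le_mul hfC (by rw [abs_sub_comm]; exact habs) (abs_nonneg _)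
            (le_trans hfx.le hfC)
        linarith
    _ = δ*(2 + 2*C*B) := by ring
    _ ≤ ε/2 := hδR
    _ < ε := by linarith

end Helpers

theorem stmt_18 {Ω : Type*} [TopologicalSpace Ω] [CompactSpace Ω] [T2Space Ω]
    (A : Subalgebra ℂ C(Ω, ℂ))
    (hclosed : IsClosed (A : Set C(Ω, ℂ)))
    (hsep : ∀ x y : Ω, x ≠ y → ∃ a ∈ A, a x ≠ a y)
    (f : C(Ω, ℝ)) (hf : ∀ x, 0 < f x) :
    MemM A f ↔
      ∃ (n : ℕ → ℕ) (H K : (m : ℕ) → Fin (n m) → C(Ω, ℂ)),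
        (∀ m i, H m i ∈ A) ∧ (∀ m i, K m i ∈ A) ∧
        TendstoUniformly (fun m x => Real.sqrt (∑ i, ‖K m i x‖ ^ 2))
          (fun x => f x) atTop ∧
        TendstoUniformly (fun m x => Real.sqrt (∑ i, ‖H m i x‖ ^ 2))
          (fun x => (f x)⁻¹) atTop ∧
        TendstoUniformly
          (fun m x => Real.sqrt
            (∑ i, ‖K m i x - (starRingEnd ℂ) (H m i x) * (f x : ℂ) ^ 2‖ ^ 2))
          (fun _ => 0) atTop := by
  have hfC : ∀ x, f x ≤ ‖f‖ := fun x =>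
    (le_abs_self _).trans (by simpa [Real.norm_eq_abs] using f.norm_coe_le_norm x)
  have hC0 : (0:ℝ) ≤ ‖f‖ := norm_nonneg _
  set finv : C(Ω, ℝ) := ⟨fun x => (f x)⁻¹, (f.continuous.inv₀ (fun x => (hf x).ne'))⟩
    with hfinvdef
  have hfD : ∀ x, (f x)⁻¹ ≤ ‖finv‖ := fun x =>
    (le_abs_self _).trans (by have := finv.norm_coe_le_norm x; rwa [Real.norm_eq_abs] at this)
  have hD0 : (0:ℝ) ≤ ‖finv‖ := norm_nonneg _
  constructor
  · rintro ⟨n, K, H, hK, hH, hKH, hKf, hHf⟩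
    refine ⟨n, H, K, hH, hK, hKf, hHf, ?_⟩
    set B := 2*‖f‖ + 1 + ‖f‖^4 * (2*‖finv‖ + 1) with hBdef
    have hB1 : 1 ≤ B := by
      have h := mul_nonneg (pow_nonneg hC0 4) (by linarith : (0:ℝ) ≤ 2*‖finv‖ + 1)
      rw [hBdef]; linarith
    rw [Metric.tendstoUniformly_iff] at hKf hHf ⊢
    intro ε hε
    set δ := min 1 (ε^2 / (2*B)) with hδdef
    have hB0 : 0 < B := by linarith
    have hδ0 : 0 < δ := lt_min one_pos (by positivity)
    have hδ1 : δ ≤ 1 := min_le_left _ _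
    have hδB : δ * B ≤ ε^2 / 2 := by
      have h1 : δ ≤ ε^2 / (2*B) := min_le_right _ _
      have h2 : δ * B ≤ (ε^2 / (2*B)) * B := mul_le_mul_of_nonneg_right h1 hB0.le
      calc δ * B ≤ (ε^2 / (2*B)) * B := h2
        _ = ε^2 / 2 := by field_simp
    filter_upwards [hKf δ hδ0, hHf δ hδ0] with m hKm hHm
    intro x
    have hsa0 : 0 ≤ Real.sqrt (∑ i, ‖K m i x‖ ^ 2) := Real.sqrt_nonneg _
    have hsb0 : 0 ≤ Real.sqrt (∑ i, ‖H m i x‖ ^ 2) := Real.sqrt_nonneg _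
    have hsa2 : (Real.sqrt (∑ i, ‖K m i x‖ ^ 2))^2
        = ∑ i, ‖K m i x‖ ^ 2 :=
      Real.sq_sqrt (Finset.sum_nonneg fun i _ => sq_nonneg _)
    have hsb2 : (Real.sqrt (∑ i, ‖H m i x‖ ^ 2))^2
        = ∑ i, ‖H m i x‖ ^ 2 :=
      Real.sq_sqrt (Finset.sum_nonneg fun i _ => sq_nonneg _)
    have hda : |f x - Real.sqrt (∑ i, ‖K m i x‖ ^ 2)| < δ := by
      simpa [Real.dist_eq] using hKm x
    have hdb : |(f x)⁻¹ - Real.sqrt (∑ i, ‖H m i x‖ ^ 2)| < δ := by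
      simpa [Real.dist_eq] using hHm x
    have hre : ∑ i, (K m i x * H m i x).re = 1 := by
      rw [← Complex.re_sum, hKH m x, Complex.one_re]
    have hE : (∑ i, ‖K m i x - (starRingEnd ℂ) (H m i x) * (f x : ℂ) ^ 2‖ ^ 2)
        = (Real.sqrt (∑ i, ‖K m i x‖ ^ 2))^2
          + (f x)^4 * (Real.sqrt (∑ i, ‖H m i x‖ ^ 2))^2 - 2*(f x)^2 := by
      rw [hsa2, hsb2]
      simp_rw [term_id']
      rw [Finset.sum_sub_distrib, Finset.sum_add_distrib, ← Finset.mul_sum,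
        ← Finset.mul_sum, hre]
      ring
    have hElt := arith1' (hf x) (hfC x) (hfD x) hsa0 hsb0 hda hdb hδ0 hδ1 (hBdef ▸ hδB) hε
    rw [← hE] at hElt
    rw [Real.dist_eq, zero_sub, abs_neg, abs_of_nonneg (Real.sqrt_nonneg _)]
    exact (Real.sqrt_lt' hε).mpr hElt
  · rintro ⟨n, H, K, hH, hK, hKf, hHf, hdiff⟩
    obtain ⟨B, hBdef⟩ : ∃ B : ℝ, B = (‖finv‖+1) + ‖f‖^2*(2*‖finv‖+1) := ⟨_, rfl⟩
    have hB1 : 1 ≤ B := by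
      have h := mul_nonneg (pow_nonneg hC0 2) (by linarith : (0:ℝ) ≤ 2*‖finv‖+1)
      rw [hBdef]; linarith
    have hB0 : 0 < B := by linarith
    set g : ℕ → C(Ω, ℂ) := fun m => ∑ i, K m i * H m i with hgdef
    have hgA : ∀ m, g m ∈ A := fun m =>
      Subalgebra.sum_mem A fun i _ => A.mul_mem (hK m i) (hH m i)
    have hgx : ∀ m x, g m x = ∑ i, K m i x * H m i x := fun m x => by
      simp [hgdef]
    have hgb : ∀ (δ : ℝ), 0 ≤ δ → δ ≤ 1 → ∀ (m : ℕ) (x : Ω),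
        Real.sqrt (∑ i, ‖K m i x - (starRingEnd ℂ) (H m i x) * (f x : ℂ)^2‖^2) ≤ δ →
        |(f x)⁻¹ - Real.sqrt (∑ i, ‖H m i x‖^2)| ≤ δ →
        ‖g m x - 1‖ ≤ δ * B := by
      intro δ hδ0 hδ1 m x h1 h2
      rw [hgx, hBdef]
      exact key_bound' (fun i => K m i x) (fun i => H m i x) (hf x) (hfC x) (hfD x)
        h1 h2 hδ0 hδ1
    have hHshift := tu_shift' hHf
    rw [Metric.tendstoUniformly_iff] at hKf hHf hdiff
    obtain ⟨δ₀, hδ₀def⟩ : ∃ d : ℝ, d = min 1 (1/(2*B)) := ⟨_, rfl⟩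
    have hδ₀0 : 0 < δ₀ := hδ₀def ▸ lt_min one_pos (by positivity)
    have hδ₀1 : δ₀ ≤ 1 := hδ₀def ▸ min_le_left _ _
    have hδ₀B : δ₀ * B ≤ 1/2 := by
      have h1 : δ₀ ≤ 1/(2*B) := hδ₀def ▸ min_le_right _ _
      have h2 : δ₀ * B ≤ (1/(2*B)) * B := mul_le_mul_of_nonneg_right h1 hB0.le
      calc δ₀ * B ≤ (1/(2*B))*B := h2
        _ = 1/2 := by field_simp
    obtain ⟨M, hM⟩ := eventually_atTop.mp ((hdiff δ₀ hδ₀0).and (hHf δ₀ hδ₀0))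
    have hcond : ∀ m x,
        Real.sqrt (∑ i, ‖K (m+M) i x - (starRingEnd ℂ) (H (m+M) i x) * (f x : ℂ)^2‖^2) ≤ δ₀ ∧
        |(f x)⁻¹ - Real.sqrt (∑ i, ‖H (m+M) i x‖^2)| ≤ δ₀ := by
      intro m x
      obtain ⟨h1, h2⟩ := hM (m+M) (Nat.le_add_left M m)
      constructor
      · have h := h1 x
        rw [Real.dist_eq, zero_sub, abs_neg, abs_of_nonneg (Real.sqrt_nonneg _)] at h
        exact h.le
      · have h := h2 x
        rw [Real.dist_eq] at h
        exact h.le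
    have hg12 : ∀ m x, ‖g (m+M) x - 1‖ ≤ 1/2 := fun m x => by
      have h := hgb δ₀ hδ₀0.le hδ₀1 (m+M) x (hcond m x).1 (hcond m x).2
      linarith
    have hinv : ∀ m, ∃ q ∈ A, g (m+M) * q = 1 := fun m =>
      inv_mem' A hclosed _ (hgA _) (fun x => hg12 m x)
    choose q hqA hq using hinv
    have hqx : ∀ m x, g (m+M) x * q m x = 1 := fun m x => by
      have h := congrArg (fun (F : C(Ω,ℂ)) => F x) (hq m)
      simpa using h
    have hgabs : ∀ m x, 1/2 ≤ ‖g (m+M) x‖ := fun m x => by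
      have h1 : ‖1 - g (m+M) x‖ ≤ 1/2 := by
        rw [norm_sub_rev]
        exact hg12 m x
      have h2 : (1:ℝ) ≤ ‖g (m+M) x‖ + ‖1 - g (m+M) x‖ := by
        have h := norm_add_le (g (m+M) x) (1 - g (m+M) x)
        simpa using h
      linarith
    have hq2 : ∀ m x, ‖q m x‖ ≤ 2 := fun m x => by
      have h1 : ‖g (m+M) x‖ * ‖q m x‖ = 1 := by
        rw [← norm_mul, hqx m x, norm_one]
      nlinarith [norm_nonneg (q m x), hgabs m x]
    have hq1 : ∀ m x, ‖q m x - 1‖ ≤ 2 * ‖g (m+M) x - 1‖ := by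
      intro m x
      have hid : q m x - 1 = q m x * (1 - g (m+M) x) := by
        linear_combination hqx m x
      rw [hid, norm_mul, norm_sub_rev 1 (g (m+M) x)]
      exact mul_le_mul_of_nonneg_right (hq2 m x) (norm_nonneg _)
    refine ⟨fun m => n (m+M), fun m i => q m * K (m+M) i, fun m i => H (m+M) i,
      fun m i => A.mul_mem (hqA m) (hK _ _), fun m i => hH _ _, ?_, ?_, hHshift M⟩
    · intro m x
      simp only [ContinuousMap.mul_apply]
      calc ∑ i, q m x * K (m+M) i x * H (m+M) i x
          = q m x * ∑ i, K (m+M) i x * H (m+M) i x := by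
            rw [Finset.mul_sum]; exact Finset.sum_congr rfl fun i _ => by ring
        _ = q m x * g (m+M) x := by rw [hgx]
        _ = 1 := by rw [mul_comm]; exact hqx m x
    · rw [Metric.tendstoUniformly_iff]
      intro ε hε
      have hR0 : (0:ℝ) < 2 + 2*‖f‖*B := by nlinarith
      obtain ⟨δ, hδdef⟩ : ∃ d : ℝ, d = min 1 (ε/(2*(2 + 2*‖f‖*B))) := ⟨_, rfl⟩
      have hδ0 : 0 < δ := hδdef ▸ lt_min one_pos (by positivity)
      have hδ1 : δ ≤ 1 := hδdef ▸ min_le_left _ _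
      have hδR : δ * (2 + 2*‖f‖*B) ≤ ε/2 := by
        have h1 : δ ≤ ε/(2*(2 + 2*‖f‖*B)) := hδdef ▸ min_le_right _ _
        have h2 : δ * (2 + 2*‖f‖*B) ≤ (ε/(2*(2 + 2*‖f‖*B))) * (2 + 2*‖f‖*B) :=
          mul_le_mul_of_nonneg_right h1 hR0.le
        calc δ * (2 + 2*‖f‖*B) ≤ (ε/(2*(2 + 2*‖f‖*B))) * (2 + 2*‖f‖*B) := h2
          _ = ε/2 := by field_simp
      filter_upwards [(tendsto_add_atTop_nat M).eventually (hKf δ hδ0),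
        (tendsto_add_atTop_nat M).eventually (hHf δ hδ0),
        (tendsto_add_atTop_nat M).eventually (hdiff δ hδ0)] with m h1 h2 h3
      intro x
      have hE3 : Real.sqrt (∑ i, ‖K (m+M) i x - (starRingEnd ℂ) (H (m+M) i x) * (f x : ℂ)^2‖^2) ≤ δ := by
        have h := h3 x
        rw [Real.dist_eq, zero_sub, abs_neg, abs_of_nonneg (Real.sqrt_nonneg _)] at h
        exact h.le
      have hE2 : |(f x)⁻¹ - Real.sqrt (∑ i, ‖H (m+M) i x‖^2)| ≤ δ := by
        have h := h2 x
        rw [Real.dist_eq] at h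
        exact h.le
      have hgsmall : ‖g (m+M) x - 1‖ ≤ δ * B := hgb δ hδ0.le hδ1 (m+M) x hE3 hE2
      have hq1' : ‖q m x - 1‖ ≤ 2*(δ*B) := (hq1 m x).trans (by linarith)
      have hqa : 0 ≤ ‖q m x‖ := norm_nonneg _
      have hsum : ∑ i, ‖(q m * K (m+M) i) x‖^2
          = ‖q m x‖^2 * ∑ i, ‖K (m+M) i x‖^2 := by
        simp only [ContinuousMap.mul_apply, norm_mul, mul_pow]
        rw [← Finset.mul_sum]
      have hsqrt : Real.sqrt (∑ i, ‖(q m * K (m+M) i) x‖^2)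
          = ‖q m x‖ * Real.sqrt (∑ i, ‖K (m+M) i x‖^2) := by
        rw [hsum, Real.sqrt_mul (sq_nonneg _), Real.sqrt_sq hqa]
      have hda : |f x - Real.sqrt (∑ i, ‖K (m+M) i x‖^2)| < δ := by
        simpa [Real.dist_eq] using h1 x
      have habs : |‖q m x‖ - 1| ≤ 2*(δ*B) := by
        calc |‖q m x‖ - 1|
            = |‖q m x‖ - ‖(1:ℂ)‖| := by rw [norm_one]
          _ ≤ ‖q m x - 1‖ := abs_norm_sub_norm_le _ _
          _ ≤ 2*(δ*B) := hq1'
      rw [Real.dist_eq, hsqrt]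
      exact arith2' (hf x) (hfC x) hqa (hq2 m x) hda habs hδ0 hδR hε
end
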